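/- arXiv:1903.01313 — 12 statements merged into one kernel-verified Lean document; each statement's English description precedes it below -/
import Mathlib

section
/- For the Tribonacci numbers, the determinant det[[T(n+2),T(n+1),T(n)],[T(n+1),T(n),T(n-1)],[T(n),T(n-1),T(n-2)]] equals −1 for all integers n. -/
lemma tribonacci_det_step (T : ℤ → ℤ)
    (hrec : ∀ n : ℤ, T n = T (n - 1) + T (n - 2) + T (n - 3)) (n : ℤ) :
    Matrix.det !![T (n + 3), T (n + 2), T (n + 1);
                  T (n + 2), T (n + 1), T n;
                  T (n + 1), T n, T (n - 1)] =
    Matrix.det !![T (n + 2), T (n + 1), T n;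
                  T (n + 1), T n, T (n - 1);
                  T n, T (n - 1), T (n - 2)] := by
  have h3 : T (n + 3) = T (n + 2) + T (n + 1) + T n := by
    have := hrec (n + 3)
    rw [show n + 3 - 1 = n + 2 by ring, show n + 3 - 2 = n + 1 by ring,
      show n + 3 - 3 = n by ring] at this
    exact this
  have h2 : T (n + 2) = T (n + 1) + T n + T (n - 1) := by
    have := hrec (n + 2)
    rw [show n + 2 - 1 = n + 1 by ring, show n + 2 - 2 = n by ring,
      show n + 2 - 3 = n - 1 by ring] at this
    exact this
  have h1 : T (n + 1) = T n + T (n - 1) + T (n - 2) := by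
    have := hrec (n + 1)
    rw [show n + 1 - 1 = n by ring, show n + 1 - 2 = n - 1 by ring,
      show n + 1 - 3 = n - 2 by ring] at this
    exact this
  rw [h3, h2, h1]
  simp [Matrix.det_fin_three]
  ring

theorem tribonacci_det (T : ℤ → ℤ) (h0 : T 0 = 0) (h1 : T 1 = 1) (h2 : T 2 = 1)
    (hrec : ∀ n : ℤ, T n = T (n - 1) + T (n - 2) + T (n - 3)) :
    ∀ n : ℤ,
      Matrix.det !![T (n + 2), T (n + 1), T n;
                    T (n + 1), T n, T (n - 1);
                    T n, T (n - 1), T (n - 2)] = -1 := by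
  have hm1 : T (-1) = 0 := by
    have := hrec 2; norm_num [h0, h1, h2] at this; linarith
  have hm2 : T (-2) = 1 := by
    have := hrec 1; norm_num [h0, h1, hm1] at this; linarith
  intro n
  induction n using Int.induction_on with
  | zero => norm_num [Matrix.det_fin_three, h0, h1, h2, hm1, hm2]; rfl
  | succ k ih =>
      have := tribonacci_det_step T hrec k
      rw [show (k : ℤ) + 1 + 2 = k + 3 by ring, show (k : ℤ) + 1 + 1 = k + 2 by ring,
        show (k : ℤ) + 1 - 1 = k by ring, show (k : ℤ) + 1 - 2 = k - 1 by ring]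
      rw [this]; exact ih
  | pred k ih =>
      have := tribonacci_det_step T hrec (-(k : ℤ) - 1)
      rw [show -(k : ℤ) - 1 + 3 = -k + 2 by ring, show -(k : ℤ) - 1 + 2 = -k + 1 by ring,
        show -(k : ℤ) - 1 + 1 = -k by ring, show -(k : ℤ) - 1 - 1 = -k - 2 by ring,
        show -(k : ℤ) - 1 - 2 = -k - 3 by ring] at this
      rw [show -(k : ℤ) - 1 + 2 = -k + 1 by ring, show -(k : ℤ) - 1 + 1 = -k by ring,
        show -(k : ℤ) - 1 - 1 = -k - 2 by ring, show -(k : ℤ) - 1 - 2 = -k - 3 by ring]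
      rw [← this]
      exact ih
end

section
/- For the Tribonacci-Lucas numbers, the determinant det[[K(n+2),K(n+1),K(n)],[K(n+1),K(n),K(n-1)],[K(n),K(n-1),K(n-2)]] equals −44 for all integers n. -/
theorem tribonacciLucas_det (K : ℤ → ℤ) (h0 : K 0 = 3) (h1 : K 1 = 1) (h2 : K 2 = 3)
    (hrec : ∀ n : ℤ, K n = K (n - 1) + K (n - 2) + K (n - 3)) :
    ∀ n : ℤ,
      Matrix.det !![K (n + 2), K (n + 1), K n;
                    K (n + 1), K n, K (n - 1);
                    K n, K (n - 1), K (n - 2)] = -44 := by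
  have hm1 : K (-1) = -1 := by
    have h := hrec 2
    norm_num [h0, h1, h2] at h
    linarith
  have hm2 : K (-2) = -1 := by
    have h := hrec 1
    norm_num [h0, h1, hm1] at h
    linarith
  have key : ∀ n : ℤ,
      Matrix.det !![K (n + 3), K (n + 2), K (n + 1);
                    K (n + 2), K (n + 1), K n;
                    K (n + 1), K n, K (n - 1)] =
      Matrix.det !![K (n + 2), K (n + 1), K n;
                    K (n + 1), K n, K (n - 1);
                    K n, K (n - 1), K (n - 2)] := by
    intro n
    rw [hrec (n + 3), show n + 3 - 1 = n + 2 by ring, show n + 3 - 2 = n + 1 by ring,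
        show n + 3 - 3 = n by ring,
        hrec (n + 2), show n + 2 - 1 = n + 1 by ring, show n + 2 - 2 = n by ring,
        show n + 2 - 3 = n - 1 by ring,
        hrec (n + 1), show n + 1 - 1 = n by ring, show n + 1 - 2 = n - 1 by ring,
        show n + 1 - 3 = n - 2 by ring]
    simp [Matrix.det_fin_three]
    ring
  intro n
  induction n using Int.induction_on with
  | zero =>
      norm_num [Matrix.det_fin_three, Matrix.vecHead, Matrix.vecTail, h0, h1, h2, hm1, hm2]
      rfl
  | succ k ih =>
      have hk := key k
      rw [show (k : ℤ) + 1 + 2 = (k : ℤ) + 3 by ring, show (k : ℤ) + 1 + 1 = (k : ℤ) + 2 by ring,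
          show (k : ℤ) + 1 - 1 = (k : ℤ) by ring, show (k : ℤ) + 1 - 2 = (k : ℤ) - 1 by ring,
          hk]
      exact ih
  | pred k ih =>
      have hk := key (-(k : ℤ) - 1)
      have e1 : -(k : ℤ) - 1 + 3 = -(k : ℤ) + 2 := by ring
      have e2 : -(k : ℤ) - 1 + 2 = -(k : ℤ) + 1 := by ring
      have e3 : -(k : ℤ) - 1 + 1 = -(k : ℤ) := by ring
      have e4 : -(k : ℤ) - 1 - 1 = -(k : ℤ) - 2 := by ring
      have e5 : -(k : ℤ) - 1 - 2 = -(k : ℤ) - 3 := by ring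
      rw [e1, e2, e3, e4, e5] at hk
      rw [e2, e3, e4, e5, ← hk]
      exact ih
end

section
/- For the Padovan numbers, the determinant det[[P(n+2),P(n+1),P(n)],[P(n+1),P(n),P(n-1)],[P(n),P(n-1),P(n-2)]] equals −1 for all integers n. -/
theorem padovan_det (P : ℤ → ℤ) (h0 : P 0 = 1) (h1 : P 1 = 1) (h2 : P 2 = 1)
    (hrec : ∀ n : ℤ, P n = P (n - 2) + P (n - 3)) :
    ∀ n : ℤ,
      Matrix.det !![P (n + 2), P (n + 1), P n;
                    P (n + 1), P n, P (n - 1);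
                    P n, P (n - 1), P (n - 2)] = -1 := by
  have hm1 : P (-1) = 0 := by
    have h := hrec 2
    norm_num [h0, h2] at h
    linarith
  have hm2 : P (-2) = 1 := by
    have h := hrec 1
    norm_num [h1, hm1] at h
    linarith
  have key : ∀ n : ℤ,
      Matrix.det !![P (n + 1 + 2), P (n + 1 + 1), P (n + 1);
                    P (n + 1 + 1), P (n + 1), P (n + 1 - 1);
                    P (n + 1), P (n + 1 - 1), P (n + 1 - 2)] =
      Matrix.det !![P (n + 2), P (n + 1), P n;
                    P (n + 1), P n, P (n - 1);
                    P n, P (n - 1), P (n - 2)] := by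
    intro n
    have hA := hrec (n + 2)
    rw [show n + 2 - 2 = n by ring, show n + 2 - 3 = n - 1 by ring] at hA
    have hB := hrec (n + 1)
    rw [show n + 1 - 2 = n - 1 by ring, show n + 1 - 3 = n - 2 by ring] at hB
    have hC := hrec (n + 3)
    rw [show n + 3 - 2 = n + 1 by ring, show n + 3 - 3 = n by ring] at hC
    have hB' : P (n - 2) = P (n + 1) - P (n - 1) := by linarith
    rw [show n + 1 + 2 = n + 3 by ring, show n + 1 + 1 = n + 2 by ring,
        show n + 1 - 1 = n by ring, show n + 1 - 2 = n - 1 by ring]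
    rw [hC, hA, hB']
    simp [Matrix.det_fin_three]
    ring
  intro n
  induction n using Int.induction_on with
  | zero =>
    norm_num [Matrix.det_fin_three, Matrix.vecHead, Matrix.vecTail, h0, h1, h2, hm1, hm2, Matrix.cons_val_zero, Matrix.cons_val_one, Matrix.cons_val_two]
  | succ i ih => rw [key i]; exact ih
  | pred i ih =>
    rw [← key (-i - 1), show (-(i:ℤ) - 1 + 1) = -(i:ℤ) by ring]
    exact ih
end

section
/- For the Perrin numbers, the determinant det[[Q(n+2),Q(n+1),Q(n)],[Q(n+1),Q(n),Q(n-1)],[Q(n),Q(n-1),Q(n-2)]] equals −23 for all integers n. -/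
theorem perrin_det (Q : ℤ → ℤ) (h0 : Q 0 = 3) (h1 : Q 1 = 0) (h2 : Q 2 = 2)
    (hrec : ∀ n : ℤ, Q n = Q (n - 2) + Q (n - 3)) :
    ∀ n : ℤ,
      Matrix.det !![Q (n + 2), Q (n + 1), Q n;
                    Q (n + 1), Q n, Q (n - 1);
                    Q n, Q (n - 1), Q (n - 2)] = -23 := by
  set D : ℤ → ℤ := fun n =>
    Matrix.det !![Q (n + 2), Q (n + 1), Q n;
                  Q (n + 1), Q n, Q (n - 1);
                  Q n, Q (n - 1), Q (n - 2)] with hD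
  have key : ∀ m : ℤ, D (m + 1) = D m := by
    intro m
    have e3 : Q (m + 3) = Q (m + 1) + Q m := by
      have := hrec (m + 3)
      rwa [show m + 3 - 2 = m + 1 by ring, show m + 3 - 3 = m by ring] at this
    have e2 : Q (m + 2) = Q m + Q (m - 1) := by
      have := hrec (m + 2)
      rwa [show m + 2 - 2 = m by ring, show m + 2 - 3 = m - 1 by ring] at this
    have e1 : Q (m + 1) = Q (m - 1) + Q (m - 2) := by
      have := hrec (m + 1)
      rwa [show m + 1 - 2 = m - 1 by ring, show m + 1 - 3 = m - 2 by ring] at this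
    simp only [hD]
    rw [show m + 1 + 2 = m + 3 by ring, show m + 1 + 1 = m + 2 by ring,
      show m + 1 - 1 = m by ring, show m + 1 - 2 = m - 1 by ring, e3, e2, e1]
    simp [Matrix.det_fin_three]
    ring
  have base : D 0 = -23 := by
    have qm1 : Q (-1) = -1 := by
      have := hrec 2; norm_num at this; linarith
    have qm2 : Q (-2) = 1 := by
      have := hrec 1; norm_num at this; linarith
    simp only [hD]
    norm_num [Matrix.det_fin_three, h0, h1, h2, qm1, qm2]
    decide
  have main : ∀ n : ℤ, D n = -23 := by
    intro n
    induction n using Int.induction_on with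
    | zero => exact base
    | succ k ih => exact (key k).trans ih
    | pred k ih =>
        have hk := key (-(k : ℤ) - 1)
        rw [show (-(k : ℤ) - 1 + 1) = -(k : ℤ) by ring] at hk
        rw [← hk]
        exact ih
  exact main
end

section
/- For the Pell-Padovan numbers, the determinant det[[R(n+2),R(n+1),R(n)],[R(n+1),R(n),R(n-1)],[R(n),R(n-1),R(n-2)]] equals −4 for all integers n. -/
theorem pellPadovan_det (R : ℤ → ℤ) (h0 : R 0 = 1) (h1 : R 1 = 1) (h2 : R 2 = 1)
    (hrec : ∀ n : ℤ, R n = 2 * R (n - 2) + R (n - 3)) :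
    ∀ n : ℤ,
      Matrix.det !![R (n + 2), R (n + 1), R n;
                    R (n + 1), R n, R (n - 1);
                    R n, R (n - 1), R (n - 2)] = -4 := by
  set D : ℤ → ℤ := fun m =>
    Matrix.det !![R (m + 2), R (m + 1), R m;
                  R (m + 1), R m, R (m - 1);
                  R m, R (m - 1), R (m - 2)] with hD
  have hstep : ∀ m : ℤ, D m = D (m - 1) := by
    intro m
    have e2 := hrec (m + 2)
    have e1 := hrec (m + 1)
    have e0 := hrec m
    simp only [show m + 2 - 2 = m from by ring, show m + 2 - 3 = m - 1 from by ring,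
      show m + 1 - 2 = m - 1 from by ring, show m + 1 - 3 = m - 2 from by ring] at e2 e1
    simp only [hD, show m - 1 + 2 = m + 1 from by ring,
      show m - 1 + 1 = m from by ring, show m - 1 - 1 = m - 2 from by ring,
      show m - 1 - 2 = m - 3 from by ring]
    rw [e2, e1, e0]
    simp [Matrix.det_fin_three]
    ring
  have hm1 : R (-1) = -1 := by
    have := hrec 2; norm_num [h0, h2] at this; linarith
  have hm2 : R (-2) = 3 := by
    have := hrec 1; norm_num [h1, hm1] at this; linarith
  have hD0 : D 0 = -4 := by
    simp only [hD]
    norm_num [Matrix.det_fin_three, Matrix.cons_val', Matrix.cons_val_zero,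
      Matrix.cons_val_one, Matrix.head_cons, Matrix.empty_val', Matrix.cons_val_fin_one,
      Matrix.cons_val_two, Matrix.tail_cons, Matrix.vecHead, Matrix.vecTail,
      h0, h1, h2, hm1, hm2]
  have hall : ∀ n : ℤ, D n = -4 := by
    intro n
    induction n using Int.induction_on with
    | zero => exact hD0
    | succ k ih =>
      have := hstep (k + 1)
      simp only [add_sub_cancel_right] at this
      rw [this, ih]
    | pred k ih =>
      have := hstep (-k)
      rw [← this]
      exact ih
  exact hall
end

section
/- For the Narayana numbers, the determinant det[[N(n+2),N(n+1),N(n)],[N(n+1),N(n),N(n-1)],[N(n),N(n-1),N(n-2)]] equals −1 for all integers n. -/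
theorem narayana_det (N : ℤ → ℤ) (h0 : N 0 = 0) (h1 : N 1 = 1) (h2 : N 2 = 1)
    (hrec : ∀ n : ℤ, N n = N (n - 1) + N (n - 3)) :
    ∀ n : ℤ,
      Matrix.det !![N (n + 2), N (n + 1), N n;
                    N (n + 1), N n, N (n - 1);
                    N n, N (n - 1), N (n - 2)] = -1 := by
  set D : ℤ → ℤ := fun n => Matrix.det !![N (n + 2), N (n + 1), N n;
                    N (n + 1), N n, N (n - 1);
                    N n, N (n - 1), N (n - 2)] with hD
  have step : ∀ n : ℤ, D (n + 1) = D n := by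
    intro n
    have e1 : N (n - 2) = N (n + 1) - N n := by
      have := hrec (n + 1)
      rw [show n + 1 - 1 = n by ring, show n + 1 - 3 = n - 2 by ring] at this
      linarith
    have e2 : N (n + 2) = N (n + 1) + N (n - 1) := by
      have := hrec (n + 2)
      rw [show n + 2 - 1 = n + 1 by ring, show n + 2 - 3 = n - 1 by ring] at this
      linarith
    have e3 : N (n + 3) = N (n + 2) + N n := by
      have := hrec (n + 3)
      rw [show n + 3 - 1 = n + 2 by ring, show n + 3 - 3 = n by ring] at this
      linarith
    simp only [hD, Matrix.det_fin_three, Matrix.cons_val', Matrix.cons_val_zero,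
      Matrix.cons_val_one, Matrix.head_cons, Matrix.empty_val', Matrix.cons_val_fin_one,
      Matrix.cons_val_two, Matrix.tail_cons, Matrix.of_apply, Matrix.head_fin_const]
    rw [show n + 1 + 2 = n + 3 by ring, show n + 1 + 1 = n + 2 by ring,
      show n + 1 - 1 = n by ring, show n + 1 - 2 = n - 1 by ring]
    rw [e3, e2, e1]
    ring
  have base : D 0 = -1 := by
    have em1 : N (-1) = 0 := by
      have := hrec 2
      norm_num at this
      linarith
    have em2 : N (-2) = 1 := by
      have := hrec 1
      norm_num at this
      linarith
    simp only [hD, Matrix.det_fin_three, Matrix.cons_val', Matrix.cons_val_zero,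
      Matrix.cons_val_one, Matrix.head_cons, Matrix.empty_val', Matrix.cons_val_fin_one,
      Matrix.cons_val_two, Matrix.tail_cons, Matrix.of_apply, Matrix.head_fin_const]
    norm_num [h0, h1, h2, em1, em2]
  intro n
  show D n = -1
  induction n using Int.induction_on with
  | zero => exact base
  | succ k ih => rw [step k]; exact ih
  | pred k ih =>
    have h := step (-(k : ℤ) - 1)
    rw [show -(k : ℤ) - 1 + 1 = -k by ring] at h
    exact h ▸ ih
end

section
/- For the Padovan-Perrin numbers, the determinant det[[S(n+2),S(n+1),S(n)],[S(n+1),S(n),S(n-1)],[S(n),S(n-1),S(n-2)]] equals −1 for all integers n. -/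
theorem padovanPerrin_det (S : ℤ → ℤ) (h0 : S 0 = 0) (h1 : S 1 = 0) (h2 : S 2 = 1)
    (hrec : ∀ n : ℤ, S n = S (n - 2) + S (n - 3)) :
    ∀ n : ℤ,
      Matrix.det !![S (n + 2), S (n + 1), S n;
                    S (n + 1), S n, S (n - 1);
                    S n, S (n - 1), S (n - 2)] = -1 := by
  have e : ∀ n : ℤ, S (n + 1) = S (n - 1) + S (n - 2) := by
    intro n
    have h := hrec (n + 1)
    rw [show n + 1 - 2 = n - 1 from by ring, show n + 1 - 3 = n - 2 from by ring] at h
    exact h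
  set D : ℤ → ℤ := fun n =>
    Matrix.det !![S (n + 2), S (n + 1), S n;
                  S (n + 1), S n, S (n - 1);
                  S n, S (n - 1), S (n - 2)] with hD
  show ∀ n : ℤ, D n = -1
  have sm1 : S (-1) = 1 := by
    have h := e 1
    rw [show (1:ℤ) + 1 = 2 from by ring, show (1:ℤ) - 1 = 0 from by ring,
      show (1:ℤ) - 2 = -1 from by ring, h0, h2] at h
    linarith
  have sm2 : S (-2) = -1 := by
    have h := e 0
    rw [show (0:ℤ) + 1 = 1 from by ring, show (0:ℤ) - 1 = -1 from by ring,
      show (0:ℤ) - 2 = -2 from by ring, h1, sm1] at h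
    linarith
  have base : D 0 = -1 := by
    simp only [hD, Matrix.det_fin_three, Matrix.cons_val', Matrix.cons_val_zero,
      Matrix.cons_val_one, Matrix.head_cons, Matrix.empty_val', Matrix.cons_val_fin_one,
      Matrix.head_fin_const, Matrix.cons_val_two, Matrix.tail_cons]
    norm_num [h0, h1, h2, sm1, sm2]
    rfl
  have key : ∀ n : ℤ, D (n + 1) = D n := by
    intro n
    have h4 : S (n - 2) = S (n + 1) - S (n - 1) := by have := e n; linarith
    have h5 : S (n + 2) = S n + S (n - 1) := by
      have := e (n + 1)
      rw [show n + 1 + 1 = n + 2 from by ring, show n + 1 - 1 = n from by ring,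
        show n + 1 - 2 = n - 1 from by ring] at this
      exact this
    have h6 : S (n + 1 + 2) = S (n + 1) + S n := by
      have := e (n + 2)
      rw [show n + 2 + 1 = n + 1 + 2 from by ring, show n + 2 - 1 = n + 1 from by ring,
        show n + 2 - 2 = n from by ring] at this
      exact this
    have m1 : D (n + 1) = Matrix.det !![S (n + 1) + S n, S n + S (n - 1), S (n + 1);
        S n + S (n - 1), S (n + 1), S n; S (n + 1), S n, S (n - 1)] := by
      simp only [hD]
      rw [h6, show n + 1 + 1 = n + 2 from by ring, show n + 1 - 1 = n from by ring,
        show n + 1 - 2 = n - 1 from by ring, h5]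
    have m2 : D n = Matrix.det !![S n + S (n - 1), S (n + 1), S n;
        S (n + 1), S n, S (n - 1); S n, S (n - 1), S (n + 1) - S (n - 1)] := by
      simp only [hD]
      rw [h5, h4]
    rw [m1, m2]
    simp [Matrix.det_fin_three]
    ring
  intro n
  induction n using Int.induction_on with
  | zero => exact base
  | succ k ih => rw [key k, ih]
  | pred k ih =>
    have h := key (-(k : ℤ) - 1)
    rw [show -(k : ℤ) - 1 + 1 = -k from by ring] at h
    rw [← h]
    exact ih
end

section
/- For the third-order Jacobsthal numbers, the determinant det[[J(n+2),J(n+1),J(n)],[J(n+1),J(n),J(n-1)],[J(n),J(n-1),J(n-2)]] equals −2^(n−1) for all integers n ≥ 2. -/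
lemma det3_aux (a b c d e f g h i : ℤ) :
    Matrix.det !![a,b,c;d,e,f;g,h,i] =
      a*e*i - a*f*h - b*d*i + b*f*g + c*d*h - c*e*g := by
  rw [Matrix.det_fin_three]
  norm_num [Matrix.cons_val_one, Matrix.cons_val_two, Matrix.vecHead, Matrix.vecTail]

theorem thirdOrderJacobsthal_det (J : ℕ → ℤ) (h0 : J 0 = 0) (h1 : J 1 = 1) (h2 : J 2 = 1)
    (hrec : ∀ n : ℕ, 3 ≤ n → J n = J (n - 1) + J (n - 2) + 2 * J (n - 3)) :
    ∀ n : ℕ, 2 ≤ n →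
      Matrix.det !![J (n + 2), J (n + 1), J n;
                    J (n + 1), J n, J (n - 1);
                    J n, J (n - 1), J (n - 2)] = -2 ^ (n - 1) := by
  intro n hn
  induction n, hn using Nat.le_induction with
  | base =>
    have h3 : J 3 = 2 := by have := hrec 3 (by norm_num); simp at this; omega
    have h4 : J 4 = 5 := by have := hrec 4 (by norm_num); simp at this; omega
    rw [det3_aux]
    norm_num [h0, h1, h2, h3, h4]
  | succ n hn ih =>
    obtain ⟨m, rfl⟩ : ∃ m, n = m + 2 := ⟨n - 2, by omega⟩
    have r3 : J (m + 3) = J (m + 2) + J (m + 1) + 2 * J m := hrec (m + 3) (by omega)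
    have r4 : J (m + 4) = J (m + 3) + J (m + 2) + 2 * J (m + 1) := hrec (m + 4) (by omega)
    have r5 : J (m + 5) = J (m + 4) + J (m + 3) + 2 * J (m + 2) := hrec (m + 5) (by omega)
    rw [det3_aux] at ih ⊢
    simp only [show m + 2 + 1 + 2 = m + 5 from rfl, show m + 2 + 1 + 1 = m + 4 from rfl,
      show m + 2 + 1 - 1 = m + 2 from rfl, show m + 2 + 1 - 2 = m + 1 from rfl,
      show m + 2 + 1 = m + 3 from rfl, show m + 2 + 2 = m + 4 from rfl,
      show m + 2 - 1 = m + 1 from rfl, show m + 2 - 2 = m from rfl] at ih ⊢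
    rw [r5, r4, r3]
    rw [r4, r3] at ih
    linear_combination 2 * ih
end

section
/- For the generalized Tetranacci sequence V(n) = r·V(n-1) + s·V(n-2) + t·V(n-3) + u·V(n-4) with u ≠ 0, extended to all integers, the 4×4 determinant of the matrix whose (i,j) entry is V(n+3−i−j+2) (i.e., the Hankel-type matrix [[V(n+3),V(n+2),V(n+1),V(n)],[V(n+2),V(n+1),V(n),V(n-1)],[V(n+1),V(n),V(n-1),V(n-2)],[V(n),V(n-1),V(n-2),V(n-3)]]) equals (−1)ⁿ·uⁿ times the same determinant evaluated at n = 0, for every integer n. -/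
set_option maxRecDepth 100000 in
set_option maxHeartbeats 4000000 in
lemma tetra_key (r s t u A a b c d e f g : ℝ)
    (h1 : A = r*a + s*b + t*c + u*d)
    (h2 : a = r*b + s*c + t*d + u*e)
    (h3 : b = r*c + s*d + t*e + u*f)
    (h4 : c = r*d + s*e + t*f + u*g) :
    Matrix.det !![A, a, b, c; a, b, c, d; b, c, d, e; c, d, e, f] =
      -u * Matrix.det !![a, b, c, d; b, c, d, e; c, d, e, f; d, e, f, g] := by
  simp [Matrix.det_succ_row_zero, Fin.sum_univ_succ, show Fin.succAbove (1 : Fin 4) 2 = 3 from rfl, show Fin.succAbove (2 : Fin 4) 2 = 3 from rfl, show Fin.succAbove (3 : Fin 4) 2 = 2 from rfl]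
  linear_combination
    (-d^3 + 2*c*d*e - c^2*f - b*e^2 + b*d*f) * h1 +
    (2*c*d^2 - 2*c^2*e - 2*b*d*e + 2*b*c*f + a*e^2 - a*d*f + u*d*e*f - u*d^2*g - u*c*f^2 + u*c*e*g + t*d*e^2 - t*d^2*f + s*c*e^2 - s*c*d*f - r*d^3 + 2*r*c*d*e - r*c^2*f) * h2 +
    (-3*c^2*d + b*d^2 + 2*b*c*e - b^2*f - u*d*e^2 + 2*u*c*e*f + 2*u*c*d*g - u*b*e*g - u^2*e*f*g - t*d^2*e + t*c*e^2 + 3*t*c*d*f - t*b*e*f - t*u*e*f^2 - t*u*e^2*g - t^2*e^2*f + 2*s*c*d*e + s*c^2*f - s*b*e^2 - s*u*e^2*f - s*u*d*e*g - s*t*e^3 - s*t*d*e*f - s^2*d*e^2 + 3*r*c*d^2 - 2*r*b*d*e + r*b*c*f - r*u*d*e*f - r*u*d^2*g - r*t*d*e^2 - r*t*d^2*f - 2*r*s*d^2*e - r^2*d^3) * h3 +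
    (c^3 + u*d^2*e - u*c*e^2 - 2*u*c*d*f + u^2*e*f^2 + t*d^3 - 3*t*c*d*e + 2*t*u*e^2*f + t^2*e^3 - s*c*d^2 - s*c^2*e + 2*s*u*d*e*f + 2*s*t*d*e^2 + s^2*d^2*e - 2*r*c^2*d + r*u*d^2*f + r*u*c*e*f + r*t*d^2*e + r*t*c*e^2 + r*s*d^3 + r*s*c*d*e + r^2*c*d^2) * h4

theorem tetranacci_simson (r s t u : ℝ) (hu : u ≠ 0) (V : ℤ → ℝ)
    (hrec : ∀ n : ℤ, V n = r * V (n - 1) + s * V (n - 2) + t * V (n - 3) + u * V (n - 4)) :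
    ∀ n : ℤ,
      Matrix.det !![V (n + 3), V (n + 2), V (n + 1), V n;
                    V (n + 2), V (n + 1), V n, V (n - 1);
                    V (n + 1), V n, V (n - 1), V (n - 2);
                    V n, V (n - 1), V (n - 2), V (n - 3)] =
        (-1 : ℝ) ^ n * u ^ n *
          Matrix.det !![V 3, V 2, V 1, V 0;
                        V 2, V 1, V 0, V (-1);
                        V 1, V 0, V (-1), V (-2);
                        V 0, V (-1), V (-2), V (-3)] := by
  set D : ℤ → ℝ := fun m =>
    Matrix.det !![V (m + 3), V (m + 2), V (m + 1), V m;
                  V (m + 2), V (m + 1), V m, V (m - 1);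
                  V (m + 1), V m, V (m - 1), V (m - 2);
                  V m, V (m - 1), V (m - 2), V (m - 3)] with hD
  have step : ∀ m : ℤ, D (m + 1) = -u * D m := by
    intro m
    have h1 := hrec (m + 4)
    have h2 := hrec (m + 3)
    have h3 := hrec (m + 2)
    have h4 := hrec (m + 1)
    rw [show m + 4 - 1 = m + 3 by ring, show m + 4 - 2 = m + 2 by ring,
        show m + 4 - 3 = m + 1 by ring, show m + 4 - 4 = m by ring] at h1
    rw [show m + 3 - 1 = m + 2 by ring, show m + 3 - 2 = m + 1 by ring,
        show m + 3 - 3 = m by ring, show m + 3 - 4 = m - 1 by ring] at h2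
    rw [show m + 2 - 1 = m + 1 by ring, show m + 2 - 2 = m by ring,
        show m + 2 - 3 = m - 1 by ring, show m + 2 - 4 = m - 2 by ring] at h3
    rw [show m + 1 - 1 = m by ring, show m + 1 - 2 = m - 1 by ring,
        show m + 1 - 3 = m - 2 by ring, show m + 1 - 4 = m - 3 by ring] at h4
    simp only [hD]
    rw [show m + 1 + 3 = m + 4 by ring, show m + 1 + 2 = m + 3 by ring,
        show m + 1 + 1 = m + 2 by ring, show m + 1 - 1 = m by ring,
        show m + 1 - 2 = m - 1 by ring, show m + 1 - 3 = m - 2 by ring]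
    exact tetra_key r s t u _ _ _ _ _ _ _ _ h1 h2 h3 h4
  have main : ∀ n : ℤ, D n = (-1 : ℝ) ^ n * u ^ n * D 0 := by
    intro n
    induction n using Int.induction_on with
    | zero => simp
    | succ k ih =>
      rw [step k, ih, zpow_add_one₀ (by norm_num : (-1 : ℝ) ≠ 0),
          zpow_add_one₀ hu]
      ring
    | pred k ih =>
      have h := step (-(k : ℤ) - 1)
      rw [show -(k : ℤ) - 1 + 1 = -k by ring] at h
      apply mul_left_cancel₀ (neg_ne_zero.mpr hu)
      rw [← h, ih, show -(k : ℤ) - 1 = (-(k:ℤ)) - 1 by ring,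
          zpow_sub_one₀ (by norm_num : (-1 : ℝ) ≠ 0), zpow_sub_one₀ hu]
      field_simp
  exact main
end

section
/- For the Tetranacci numbers, the 4×4 determinant det[[M(n+3),M(n+2),M(n+1),M(n)],[M(n+2),M(n+1),M(n),M(n-1)],[M(n+1),M(n),M(n-1),M(n-2)],[M(n),M(n-1),M(n-2),M(n-3)]] equals (−1)^(n−1) for all integers n. -/
set_option maxHeartbeats 1000000 in
theorem det4 (a b c d e f g h i j k l m n o p : ℤ) :
    Matrix.det !![a,b,c,d;e,f,g,h;i,j,k,l;m,n,o,p] =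
      a*(f*(k*p-l*o)-g*(j*p-l*n)+h*(j*o-k*n))
      - b*(e*(k*p-l*o)-g*(i*p-l*m)+h*(i*o-k*m))
      + c*(e*(j*p-l*n)-f*(i*p-l*m)+h*(i*n-j*m))
      - d*(e*(j*o-k*n)-f*(i*o-k*m)+g*(i*n-j*m)) := by
  rw [Matrix.det_succ_row_zero]
  simp [Fin.sum_univ_succ, Matrix.det_fin_three, Fin.succAbove]
  ring

theorem tetranacci_det (M : ℤ → ℤ) (h0 : M 0 = 0) (h1 : M 1 = 1) (h2 : M 2 = 1) (h3 : M 3 = 2)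
    (hrec : ∀ n : ℤ, M n = M (n - 1) + M (n - 2) + M (n - 3) + M (n - 4)) :
    ∀ n : ℤ,
      Matrix.det !![M (n + 3), M (n + 2), M (n + 1), M n;
                    M (n + 2), M (n + 1), M n, M (n - 1);
                    M (n + 1), M n, M (n - 1), M (n - 2);
                    M n, M (n - 1), M (n - 2), M (n - 3)] =
        ((-1 : ℤˣ) ^ (n - 1) : ℤˣ) := by
  have hM4 : ∀ n : ℤ, M (n + 4) = M (n + 3) + M (n + 2) + M (n + 1) + M n := by
    intro n
    have := hrec (n + 4)
    simpa [show n + 4 - 1 = n + 3 by ring, show n + 4 - 2 = n + 2 by ring,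
      show n + 4 - 3 = n + 1 by ring, show n + 4 - 4 = n by ring] using this
  have key : ∀ n : ℤ,
      Matrix.det !![M (n + 1 + 3), M (n + 1 + 2), M (n + 1 + 1), M (n + 1);
                    M (n + 1 + 2), M (n + 1 + 1), M (n + 1), M (n + 1 - 1);
                    M (n + 1 + 1), M (n + 1), M (n + 1 - 1), M (n + 1 - 2);
                    M (n + 1), M (n + 1 - 1), M (n + 1 - 2), M (n + 1 - 3)] =
      - Matrix.det !![M (n + 3), M (n + 2), M (n + 1), M n;
                    M (n + 2), M (n + 1), M n, M (n - 1);
                    M (n + 1), M n, M (n - 1), M (n - 2);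
                    M n, M (n - 1), M (n - 2), M (n - 3)] := by
    intro n
    have e1 : M (n + 1) = M n + M (n - 1) + M (n - 2) + M (n - 3) := by
      have h := hM4 (n - 3)
      rw [show n - 3 + 4 = n + 1 by ring, show n - 3 + 3 = n by ring,
        show n - 3 + 2 = n - 1 by ring, show n - 3 + 1 = n - 2 by ring] at h
      exact h
    have e2 : M (n + 2) = M (n + 1) + M n + M (n - 1) + M (n - 2) := by
      have h := hM4 (n - 2)
      rw [show n - 2 + 4 = n + 2 by ring, show n - 2 + 3 = n + 1 by ring,
        show n - 2 + 2 = n by ring, show n - 2 + 1 = n - 1 by ring] at h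
      exact h
    have e3 : M (n + 3) = M (n + 2) + M (n + 1) + M n + M (n - 1) := by
      have h := hM4 (n - 1)
      rw [show n - 1 + 4 = n + 3 by ring, show n - 1 + 3 = n + 2 by ring,
        show n - 1 + 2 = n + 1 by ring, show n - 1 + 1 = n by ring] at h
      exact h
    have e4 : M (n + 4) = M (n + 3) + M (n + 2) + M (n + 1) + M n := hM4 n
    rw [show n + 1 + 3 = n + 4 by ring, show n + 1 + 2 = n + 3 by ring,
      show n + 1 + 1 = n + 2 by ring, show n + 1 - 1 = n by ring,
      show n + 1 - 2 = n - 1 by ring, show n + 1 - 3 = n - 2 by ring,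
      det4, det4, e4, e3, e2, e1]
    ring
  have hstep : ∀ m : ℤ, ((-1 : ℤˣ) ^ (m + 1)) = -((-1 : ℤˣ) ^ m) := by
    intro m
    rw [zpow_add_one]
    simp
  have hm1 : M (-1) = 0 := by have := hrec 3; norm_num at this; linarith
  have hm2 : M (-2) = 0 := by have := hrec 2; norm_num at this; linarith
  have hm3 : M (-3) = 1 := by have := hrec 1; norm_num at this; linarith
  intro n
  induction n using Int.induction_on with
  | zero =>
      norm_num [det4, hm1, hm2, hm3, h0, h1, h2, h3]
  | succ k ih =>
      rw [key (k : ℤ), ih, show ((k : ℤ) + 1 - 1) = (k - 1) + 1 by ring, hstep, Units.val_neg]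
  | pred k ih =>
      have hkey := key (-(k : ℤ) - 1)
      rw [show (-(k : ℤ) - 1 + 1) = -(k : ℤ) by ring] at hkey ⊢
      rw [ih] at hkey
      have hu : (((-1 : ℤˣ) ^ (-(k : ℤ) - 1) : ℤˣ) : ℤ)
          = -(((-1 : ℤˣ) ^ (-(k : ℤ) - 1 - 1) : ℤˣ) : ℤ) := by
        have h := hstep (-(k : ℤ) - 1 - 1)
        rw [show (-(k : ℤ) - 1 - 1) + 1 = -(k : ℤ) - 1 by ring] at h
        rw [h, Units.val_neg]
      linarith
end

section
/- For the Pentanacci numbers, the 5×5 Hankel-type determinant det[[P(n+4),P(n+3),P(n+2),P(n+1),P(n)],[P(n+3),P(n+2),P(n+1),P(n),P(n-1)],[P(n+2),P(n+1),P(n),P(n-1),P(n-2)],[P(n+1),P(n),P(n-1),P(n-2),P(n-3)],[P(n),P(n-1),P(n-2),P(n-3),P(n-4)]] equals 1 for all integers n. -/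
lemma det_fin_four' (A : Matrix (Fin 4) (Fin 4) ℤ) :
    A.det = A 0 0*A 1 1*A 2 2*A 3 3 - A 0 0*A 1 1*A 2 3*A 3 2 - A 0 0*A 1 2*A 2 1*A 3 3 + A 0 0*A 1 2*A 2 3*A 3 1 + A 0 0*A 1 3*A 2 1*A 3 2 - A 0 0*A 1 3*A 2 2*A 3 1 - A 0 1*A 1 0*A 2 2*A 3 3 + A 0 1*A 1 0*A 2 3*A 3 2 + A 0 1*A 1 2*A 2 0*A 3 3 - A 0 1*A 1 2*A 2 3*A 3 0 - A 0 1*A 1 3*A 2 0*A 3 2 + A 0 1*A 1 3*A 2 2*A 3 0 + A 0 2*A 1 0*A 2 1*A 3 3 - A 0 2*A 1 0*A 2 3*A 3 1 - A 0 2*A 1 1*A 2 0*A 3 3 + A 0 2*A 1 1*A 2 3*A 3 0 + A 0 2*A 1 3*A 2 0*A 3 1 - A 0 2*A 1 3*A 2 1*A 3 0 - A 0 3*A 1 0*A 2 1*A 3 2 + A 0 3*A 1 0*A 2 2*A 3 1 + A 0 3*A 1 1*A 2 0*A 3 2 - A 0 3*A 1 1*A 2 2*A 3 0 - A 0 3*A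 1 2*A 2 0*A 3 1 + A 0 3*A 1 2*A 2 1*A 3 0 := by
  simp [Matrix.det_succ_row_zero, Matrix.det_fin_three, Fin.sum_univ_succ,
    Matrix.submatrix_apply, Fin.succAbove_zero, Fin.succAbove_ne_zero_zero, show Fin.succAbove (1:Fin 4) (2:Fin 3) = 3 from rfl, show Fin.succAbove (2:Fin 4) (2:Fin 3) = 3 from rfl, show Fin.succAbove (3:Fin 4) (2:Fin 3) = 2 from rfl, show (Fin.succ 2 : Fin 4) = 3 from rfl, show (Fin.castSucc 2 : Fin 4) = 2 from rfl]
  ring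

set_option maxHeartbeats 4000000 in
lemma det_fin_five' (A : Matrix (Fin 5) (Fin 5) ℤ) :
    A.det = A 0 0*A 1 1*A 2 2*A 3 3*A 4 4 - A 0 0*A 1 1*A 2 2*A 3 4*A 4 3 - A 0 0*A 1 1*A 2 3*A 3 2*A 4 4 + A 0 0*A 1 1*A 2 3*A 3 4*A 4 2 + A 0 0*A 1 1*A 2 4*A 3 2*A 4 3 - A 0 0*A 1 1*A 2 4*A 3 3*A 4 2 - A 0 0*A 1 2*A 2 1*A 3 3*A 4 4 + A 0 0*A 1 2*A 2 1*A 3 4*A 4 3 + A 0 0*A 1 2*A 2 3*A 3 1*A 4 4 - A 0 0*A 1 2*A 2 3*A 3 4*A 4 1 - A 0 0*A 1 2*A 2 4*A 3 1*A 4 3 + A 0 0*A 1 2*A 2 4*A 3 3*A 4 1 + A 0 0*A 1 3*A 2 1*A 3 2*A 4 4 - A 0 0*A 1 3*A 2 1*A 3 4*A 4 2 - A 0 0*A 1 3*A 2 2*A 3 1*A 4 4 + A 0 0*A 1 3*A 2 2*A 3 4*A 4 1 + A 0 0*A 1 3*A 2 4*A 3 1*A 4 2 - A 0 0*A 1 3*A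 2 4*A 3 2*A 4 1 - A 0 0*A 1 4*A 2 1*A 3 2*A 4 3 + A 0 0*A 1 4*A 2 1*A 3 3*A 4 2 + A 0 0*A 1 4*A 2 2*A 3 1*A 4 3 - A 0 0*A 1 4*A 2 2*A 3 3*A 4 1 - A 0 0*A 1 4*A 2 3*A 3 1*A 4 2 + A 0 0*A 1 4*A 2 3*A 3 2*A 4 1 - A 0 1*A 1 0*A 2 2*A 3 3*A 4 4 + A 0 1*A 1 0*A 2 2*A 3 4*A 4 3 + A 0 1*A 1 0*A 2 3*A 3 2*A 4 4 - A 0 1*A 1 0*A 2 3*A 3 4*A 4 2 - A 0 1*A 1 0*A 2 4*A 3 2*A 4 3 + A 0 1*A 1 0*A 2 4*A 3 3*A 4 2 + A 0 1*A 1 2*A 2 0*A 3 3*A 4 4 - A 0 1*A 1 2*A 2 0*A 3 4*A 4 3 - A 0 1*A 1 2*A 2 3*A 3 0*A 4 4 + A 0 1*A 1 2*A 2 3*A 3 4*A 4 0 + A 0 1*A 1 2*A 2 4*A 3 0*A 4 3 - A 0 1*A 1 2*A 2 4*A 3 3*A 4 0 - A 0 1*A 1 3*A 2 0*A 3 2*A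 4 4 + A 0 1*A 1 3*A 2 0*A 3 4*A 4 2 + A 0 1*A 1 3*A 2 2*A 3 0*A 4 4 - A 0 1*A 1 3*A 2 2*A 3 4*A 4 0 - A 0 1*A 1 3*A 2 4*A 3 0*A 4 2 + A 0 1*A 1 3*A 2 4*A 3 2*A 4 0 + A 0 1*A 1 4*A 2 0*A 3 2*A 4 3 - A 0 1*A 1 4*A 2 0*A 3 3*A 4 2 - A 0 1*A 1 4*A 2 2*A 3 0*A 4 3 + A 0 1*A 1 4*A 2 2*A 3 3*A 4 0 + A 0 1*A 1 4*A 2 3*A 3 0*A 4 2 - A 0 1*A 1 4*A 2 3*A 3 2*A 4 0 + A 0 2*A 1 0*A 2 1*A 3 3*A 4 4 - A 0 2*A 1 0*A 2 1*A 3 4*A 4 3 - A 0 2*A 1 0*A 2 3*A 3 1*A 4 4 + A 0 2*A 1 0*A 2 3*A 3 4*A 4 1 + A 0 2*A 1 0*A 2 4*A 3 1*A 4 3 - A 0 2*A 1 0*A 2 4*A 3 3*A 4 1 - A 0 2*A 1 1*A 2 0*A 3 3*A 4 4 + A 0 2*A 1 1*A 2 0*A 3 4*A 4 3 + A 0 2*A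 1 1*A 2 3*A 3 0*A 4 4 - A 0 2*A 1 1*A 2 3*A 3 4*A 4 0 - A 0 2*A 1 1*A 2 4*A 3 0*A 4 3 + A 0 2*A 1 1*A 2 4*A 3 3*A 4 0 + A 0 2*A 1 3*A 2 0*A 3 1*A 4 4 - A 0 2*A 1 3*A 2 0*A 3 4*A 4 1 - A 0 2*A 1 3*A 2 1*A 3 0*A 4 4 + A 0 2*A 1 3*A 2 1*A 3 4*A 4 0 + A 0 2*A 1 3*A 2 4*A 3 0*A 4 1 - A 0 2*A 1 3*A 2 4*A 3 1*A 4 0 - A 0 2*A 1 4*A 2 0*A 3 1*A 4 3 + A 0 2*A 1 4*A 2 0*A 3 3*A 4 1 + A 0 2*A 1 4*A 2 1*A 3 0*A 4 3 - A 0 2*A 1 4*A 2 1*A 3 3*A 4 0 - A 0 2*A 1 4*A 2 3*A 3 0*A 4 1 + A 0 2*A 1 4*A 2 3*A 3 1*A 4 0 - A 0 3*A 1 0*A 2 1*A 3 2*A 4 4 + A 0 3*A 1 0*A 2 1*A 3 4*A 4 2 + A 0 3*A 1 0*A 2 2*A 3 1*A 4 4 - A 0 3*A 1 0*A 2 2*A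 3 4*A 4 1 - A 0 3*A 1 0*A 2 4*A 3 1*A 4 2 + A 0 3*A 1 0*A 2 4*A 3 2*A 4 1 + A 0 3*A 1 1*A 2 0*A 3 2*A 4 4 - A 0 3*A 1 1*A 2 0*A 3 4*A 4 2 - A 0 3*A 1 1*A 2 2*A 3 0*A 4 4 + A 0 3*A 1 1*A 2 2*A 3 4*A 4 0 + A 0 3*A 1 1*A 2 4*A 3 0*A 4 2 - A 0 3*A 1 1*A 2 4*A 3 2*A 4 0 - A 0 3*A 1 2*A 2 0*A 3 1*A 4 4 + A 0 3*A 1 2*A 2 0*A 3 4*A 4 1 + A 0 3*A 1 2*A 2 1*A 3 0*A 4 4 - A 0 3*A 1 2*A 2 1*A 3 4*A 4 0 - A 0 3*A 1 2*A 2 4*A 3 0*A 4 1 + A 0 3*A 1 2*A 2 4*A 3 1*A 4 0 + A 0 3*A 1 4*A 2 0*A 3 1*A 4 2 - A 0 3*A 1 4*A 2 0*A 3 2*A 4 1 - A 0 3*A 1 4*A 2 1*A 3 0*A 4 2 + A 0 3*A 1 4*A 2 1*A 3 2*A 4 0 + A 0 3*A 1 4*A 2 2*A 3 0*A 4 1 -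 A 0 3*A 1 4*A 2 2*A 3 1*A 4 0 + A 0 4*A 1 0*A 2 1*A 3 2*A 4 3 - A 0 4*A 1 0*A 2 1*A 3 3*A 4 2 - A 0 4*A 1 0*A 2 2*A 3 1*A 4 3 + A 0 4*A 1 0*A 2 2*A 3 3*A 4 1 + A 0 4*A 1 0*A 2 3*A 3 1*A 4 2 - A 0 4*A 1 0*A 2 3*A 3 2*A 4 1 - A 0 4*A 1 1*A 2 0*A 3 2*A 4 3 + A 0 4*A 1 1*A 2 0*A 3 3*A 4 2 + A 0 4*A 1 1*A 2 2*A 3 0*A 4 3 - A 0 4*A 1 1*A 2 2*A 3 3*A 4 0 - A 0 4*A 1 1*A 2 3*A 3 0*A 4 2 + A 0 4*A 1 1*A 2 3*A 3 2*A 4 0 + A 0 4*A 1 2*A 2 0*A 3 1*A 4 3 - A 0 4*A 1 2*A 2 0*A 3 3*A 4 1 - A 0 4*A 1 2*A 2 1*A 3 0*A 4 3 + A 0 4*A 1 2*A 2 1*A 3 3*A 4 0 + A 0 4*A 1 2*A 2 3*A 3 0*A 4 1 - A 0 4*A 1 2*A 2 3*A 3 1*A 4 0 - A 0 4*A 1 3*A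 2 0*A 3 1*A 4 2 + A 0 4*A 1 3*A 2 0*A 3 2*A 4 1 + A 0 4*A 1 3*A 2 1*A 3 0*A 4 2 - A 0 4*A 1 3*A 2 1*A 3 2*A 4 0 - A 0 4*A 1 3*A 2 2*A 3 0*A 4 1 + A 0 4*A 1 3*A 2 2*A 3 1*A 4 0 := by
  rw [Matrix.det_succ_row_zero]
  simp only [Fin.sum_univ_succ, Fin.sum_univ_zero, det_fin_four', Matrix.submatrix_apply,
    show Fin.succAbove (0:Fin 5) (0:Fin 4) = 1 from rfl, show Fin.succAbove (0:Fin 5) (1:Fin 4) = 2 from rfl, show Fin.succAbove (0:Fin 5) (2:Fin 4) = 3 from rfl, show Fin.succAbove (0:Fin 5) (3:Fin 4) = 4 from rfl, show Fin.succAbove (1:Fin 5) (0:Fin 4) = 0 from rfl, show Fin.succAbove (1:Fin 5) (1:Fin 4) = 2 from rfl, show Fin.succAbove (1:Fin 5) (2:Fin 4) = 3 from rfl, show Fin.succAbove (1:Fin 5) (3:Fin 4) = 4 from rfl, show Fin.succAbove (2:Fin 5) (0:Fin 4) = 0 from rfl, show Fin.succAbove (2:Fin 5) (1:Fin 4) =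 1 from rfl, show Fin.succAbove (2:Fin 5) (2:Fin 4) = 3 from rfl, show Fin.succAbove (2:Fin 5) (3:Fin 4) = 4 from rfl, show Fin.succAbove (3:Fin 5) (0:Fin 4) = 0 from rfl, show Fin.succAbove (3:Fin 5) (1:Fin 4) = 1 from rfl, show Fin.succAbove (3:Fin 5) (2:Fin 4) = 2 from rfl, show Fin.succAbove (3:Fin 5) (3:Fin 4) = 4 from rfl, show Fin.succAbove (4:Fin 5) (0:Fin 4) = 0 from rfl, show Fin.succAbove (4:Fin 5) (1:Fin 4) = 1 from rfl, show Fin.succAbove (4:Fin 5) (2:Fin 4) = 2 from rfl, show Fin.succAbove (4:Fin 5) (3:Fin 4) = 3 from rfl, show Fin.succ (0:Fin 4) = (1:Fin 5) from rfl, show Fin.succ (1:Fin 4) = (2:Fin 5) from rfl, show Fin.succ (2:Fin 4) = (3:Fin 5) from rfl, show Fin.succ (3:Fin 4) = (4:Fin 5) from rfl, show ((0:Fin 4).succ : Fin 5) = 1 from rfl, show ((0:Fin 3).succ.succ : Fin 5) = 2 from rfl, show ((0:Fin 2).succ.succ.succ : Fin 5) = 3 from rfl, show ((0:Fin 1).succ.succ.succ.succ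 : Fin 5) = 4 from rfl, show (((0:Fin 5)):ℕ) = 0 from rfl, show (((1:Fin 5)):ℕ) = 1 from rfl, show (((2:Fin 5)):ℕ) = 2 from rfl, show (((3:Fin 5)):ℕ) = 3 from rfl, show (((4:Fin 5)):ℕ) = 4 from rfl]
  norm_num
  ring

set_option maxHeartbeats 12000000 in
lemma det5_shift (x0 x1 x2 x3 x4 x5 x6 x7 x8 x9 : ℤ)
    (h5 : x5 = x4 + x3 + x2 + x1 + x0)
    (h6 : x6 = x5 + x4 + x3 + x2 + x1)
    (h7 : x7 = x6 + x5 + x4 + x3 + x2)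
    (h8 : x8 = x7 + x6 + x5 + x4 + x3)
    (h9 : x9 = x8 + x7 + x6 + x5 + x4) :
    Matrix.det !![x9,x8,x7,x6,x5; x8,x7,x6,x5,x4; x7,x6,x5,x4,x3; x6,x5,x4,x3,x2; x5,x4,x3,x2,x1]
    = Matrix.det !![x8,x7,x6,x5,x4; x7,x6,x5,x4,x3; x6,x5,x4,x3,x2; x5,x4,x3,x2,x1; x4,x3,x2,x1,x0] := by
  subst h9 h8 h7 h6 h5
  rw [det_fin_five', det_fin_five']
  simp only [Matrix.cons_val_zero, Matrix.cons_val_one, Matrix.cons_val_two, Matrix.cons_val_three,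
    Matrix.cons_val_four, Matrix.head_cons, Matrix.tail_cons, Matrix.vecHead, Matrix.vecTail,
    Matrix.of_apply, Function.comp, Matrix.cons_val_succ]
  ring

lemma det5_base : Matrix.det !![(4:ℤ),2,1,1,0; 2,1,1,0,0; 1,1,0,0,0; 1,0,0,0,0; 0,0,0,0,1] = 1 := by
  rw [det_fin_five']
  simp only [Matrix.cons_val_zero, Matrix.cons_val_one, Matrix.cons_val_two, Matrix.cons_val_three,
    Matrix.cons_val_four, Matrix.head_cons, Matrix.tail_cons, Matrix.vecHead, Matrix.vecTail,
    Matrix.of_apply, Function.comp, Matrix.cons_val_succ]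
  ring_nf

theorem pentanacci_det (P : ℤ → ℤ) (h0 : P 0 = 0) (h1 : P 1 = 1) (h2 : P 2 = 1)
    (h3 : P 3 = 2) (h4 : P 4 = 4)
    (hrec : ∀ n : ℤ, P n = P (n - 1) + P (n - 2) + P (n - 3) + P (n - 4) + P (n - 5)) :
    ∀ n : ℤ,
      Matrix.det !![P (n + 4), P (n + 3), P (n + 2), P (n + 1), P n;
                    P (n + 3), P (n + 2), P (n + 1), P n, P (n - 1);
                    P (n + 2), P (n + 1), P n, P (n - 1), P (n - 2);
                    P (n + 1), P n, P (n - 1), P (n - 2), P (n - 3);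
                    P n, P (n - 1), P (n - 2), P (n - 3), P (n - 4)] = 1 := by
  set D : ℤ → ℤ := fun n =>
      Matrix.det !![P (n + 4), P (n + 3), P (n + 2), P (n + 1), P n;
                    P (n + 3), P (n + 2), P (n + 1), P n, P (n - 1);
                    P (n + 2), P (n + 1), P n, P (n - 1), P (n - 2);
                    P (n + 1), P n, P (n - 1), P (n - 2), P (n - 3);
                    P n, P (n - 1), P (n - 2), P (n - 3), P (n - 4)] with hD
  show ∀ n : ℤ, D n = 1
  have key : ∀ n : ℤ, D (n + 1) = D n := by
    intro n
    have r : ∀ m : ℤ, P (m + 5) = P (m + 4) + P (m + 3) + P (m + 2) + P (m + 1) + P m := by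
      intro m
      have := hrec (m + 5)
      rw [show m+5-1 = m+4 by ring, show m+5-2 = m+3 by ring, show m+5-3 = m+2 by ring,
        show m+5-4 = m+1 by ring, show m+5-5 = m by ring] at this
      linarith
    have r9 := r n
    have r8 := r (n-1)
    have r7 := r (n-2)
    have r6 := r (n-3)
    have r5 := r (n-4)
    rw [show n-1+5 = n+4 by ring, show n-1+4 = n+3 by ring, show n-1+3 = n+2 by ring,
        show n-1+2 = n+1 by ring, show n-1+1 = n by ring] at r8
    rw [show n-2+5 = n+3 by ring, show n-2+4 = n+2 by ring, show n-2+3 = n+1 by ring,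
        show n-2+2 = n by ring, show n-2+1 = n-1 by ring] at r7
    rw [show n-3+5 = n+2 by ring, show n-3+4 = n+1 by ring, show n-3+3 = n by ring,
        show n-3+2 = n-1 by ring, show n-3+1 = n-2 by ring] at r6
    rw [show n-4+5 = n+1 by ring, show n-4+4 = n by ring, show n-4+3 = n-1 by ring,
        show n-4+2 = n-2 by ring, show n-4+1 = n-3 by ring] at r5
    rw [hD]
    simp only
    rw [show n+1+4 = n+5 by ring, show n+1+3 = n+4 by ring, show n+1+2 = n+3 by ring,
        show n+1+1 = n+2 by ring, show n+1-1 = n by ring, show n+1-2 = n-1 by ring,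
        show n+1-3 = n-2 by ring, show n+1-4 = n-3 by ring]
    exact det5_shift (P (n-4)) (P (n-3)) (P (n-2)) (P (n-1)) (P n) (P (n+1)) (P (n+2))
      (P (n+3)) (P (n+4)) (P (n+5)) r5 r6 r7 r8 r9
  have pm1 : P (-1) = 0 := by
    have := hrec 4; norm_num at this; linarith
  have pm2 : P (-2) = 0 := by
    have := hrec 3; norm_num at this; linarith
  have pm3 : P (-3) = 0 := by
    have := hrec 2; norm_num at this; linarith
  have pm4 : P (-4) = 1 := by
    have := hrec 1; norm_num at this; linarith
  have base : D 0 = 1 := by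
    rw [hD]
    simp only [show (0:ℤ)+4=4 from rfl, show (0:ℤ)+3=3 from rfl, show (0:ℤ)+2=2 from rfl,
      show (0:ℤ)+1=1 from rfl, show (0:ℤ)-1=-1 from rfl, show (0:ℤ)-2=-2 from rfl,
      show (0:ℤ)-3=-3 from rfl, show (0:ℤ)-4=-4 from rfl, h0, h1, h2, h3, h4, pm1, pm2, pm3, pm4]
    exact det5_base
  intro n
  induction n using Int.induction_on with
  | zero => exact base
  | succ k ih => rw [key k]; exact ih
  | pred k ih =>
      have hk := key (-(k:ℤ)-1)
      rw [show (-(k:ℤ)-1+1 : ℤ) = -(k:ℤ) by ring] at hk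
      rw [← hk]; exact ih
end

section
/- Let m ≥ 2 and let V : ℤ → ℝ satisfy the m-th order recurrence V(n) = Σ_{i=1}^{m} r_i·V(n−i) with r_m ≠ 0. Define f(n) as the determinant of the m×m Hankel-type matrix whose (i,j) entry is V(n + m − i − j + 1) for 1 ≤ i,j ≤ m. Then for all integers n, f(n) = y(n)·r_mⁿ·f(0), where y(n) = 1 if m is odd and y(n) = (−1)ⁿ if m is even. -/
lemma simson_step (k : ℕ) (r : ℕ → ℝ) (V : ℤ → ℝ)
    (hrec : ∀ n : ℤ, V n = ∑ i ∈ Finset.Icc 1 (k+2), r i * V (n - i)) (n : ℤ) :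
    Matrix.det (Matrix.of fun i j : Fin (k+2) => V ((n+1) + (k+2) - 1 - i - j)) =
      ((-1:ℝ)^(k+1) * r (k+2)) *
        Matrix.det (Matrix.of fun i j : Fin (k+2) => V (n + (k+2) - 1 - i - j)) := by
  have hrec' : ∀ x : ℤ, V x = ∑ i : Fin (k+2), r (i.val+1) * V (x - (i.val+1)) := by
    intro x
    rw [hrec x, ← Finset.Ico_add_one_right_eq_Icc, Finset.sum_Ico_eq_sum_range, Nat.add_sub_cancel,
      ← Fin.sum_univ_eq_sum_range (fun t => r (1+t) * V (x - (1+t : ℕ))) (k+2)]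
    apply Finset.sum_congr rfl
    intro i _
    rw [add_comm 1 (i : ℕ)]
    refine congr_arg₂ (· * ·) rfl (congrArg V (by push_cast; ring))
  set A : Matrix (Fin (k+2)) (Fin (k+2)) ℝ :=
    Matrix.of fun i j : Fin (k+2) => V (n + (k+2) - 1 - i - j) with hA
  set P : Matrix (Fin (k+2)) (Fin (k+2)) ℝ :=
    Matrix.of fun i j : Fin (k+2) => A (i - 1) j with hP
  have hsub : ∀ i : Fin (k+2), i ≠ 0 → ((i - 1 : Fin (k+2)) : ℤ) = (i : ℤ) - 1 := by
    intro i hi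
    have hv : i.val ≠ 0 := fun h => hi (Fin.ext h)
    have h1 : (1 : Fin (k+2)).val = 1 := rfl
    have h2 := Fin.sub_val_of_le (a := i) (b := 1) (Fin.le_def.mpr (by omega))
    omega
  have hN : (Matrix.of fun i j : Fin (k+2) => V ((n+1) + (k+2) - 1 - i - j))
      = P.updateRow 0 (∑ l : Fin (k+2), (if l = 0 then r (k+2) else r l.val) • P l) := by
    ext i j
    rcases eq_or_ne i 0 with rfl | hi
    · rw [Matrix.of_apply, Matrix.updateRow_self, Finset.sum_apply]
      rw [hrec' (n + 1 + (k+2) - 1 - (0:Fin (k+2)) - j)]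
      conv_rhs => rw [← Equiv.sum_comp (Equiv.addRight (1 : Fin (k+2)))]
      apply Finset.sum_congr rfl
      intro i _
      simp only [Equiv.coe_addRight, Pi.smul_apply, smul_eq_mul]
      rcases eq_or_ne (i + 1) 0 with h0 | h0
      · have hlt := i.isLt
        have h : (i.val + 1) % (k+2) = 0 := by
          have := congrArg Fin.val h0
          simp [Fin.val_add] at this
          exact this
        have hvnat : i.val = k+1 := by
          rcases Nat.lt_or_ge i.val (k+1) with hl | hg
          · rw [Nat.mod_eq_of_lt (by omega)] at h; omega
          · omega
        have hm1 : ((0:Fin (k+2)) - 1) = i := by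
          rw [zero_sub, neg_eq_iff_add_eq_zero]; exact (add_comm 1 i).trans h0
        erw [if_pos h0]
        rw [h0, hP, Matrix.of_apply, hm1, hA, Matrix.of_apply]
        refine congr_arg₂ (· * ·) (congrArg r (by omega))
          (congrArg V (by push_cast [hvnat, Fin.val_zero]; ring))
      · have hval : ((i+1 : Fin (k+2)) : ℕ) = (i : ℕ) + 1 := by
          have h2 := hsub (i+1) h0
          rw [add_sub_cancel_right] at h2
          omega
        erw [if_neg h0]
        rw [hP, Matrix.of_apply, add_sub_cancel_right, hA, Matrix.of_apply]
        refine congr_arg₂ (· * ·) (by rw [hval])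
          (congrArg V (by push_cast [hval, Fin.val_zero]; ring))
    · rw [Matrix.of_apply, Matrix.updateRow_ne hi, hP, Matrix.of_apply, hA, Matrix.of_apply]
      exact congrArg V (by rw [hsub i hi]; ring)
  rw [hN, Matrix.det_updateRow_sum, if_pos rfl]
  have hPperm : P = A.submatrix (⇑(Equiv.subRight (1 : Fin (k+2)))) id := by
    ext i j; rfl
  have hσ : Equiv.subRight (1 : Fin (k+2)) = (finRotate (k+2))⁻¹ := by
    apply Equiv.ext
    intro x
    apply (finRotate (k+2)).injective
    simp [finRotate_succ_apply, Equiv.subRight]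
  have hsign : ((Equiv.Perm.sign (Equiv.subRight (1 : Fin (k+2))) : ℤ) : ℝ) = (-1)^(k+1) := by
    rw [hσ, Equiv.Perm.sign_inv, sign_finRotate]
    simp
  rw [hPperm, Matrix.det_permute, hsign, smul_eq_mul]
  ring

theorem mStep_simson (m : ℕ) (hm : 2 ≤ m) (r : ℕ → ℝ) (hr : r m ≠ 0) (V : ℤ → ℝ)
    (hrec : ∀ n : ℤ, V n = ∑ i ∈ Finset.Icc 1 m, r i * V (n - i)) :
    ∀ n : ℤ,
      Matrix.det (Matrix.of fun i j : Fin m => V (n + m - 1 - i - j)) =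
        (if Odd m then 1 else (-1 : ℝ) ^ n) * r m ^ n *
          Matrix.det (Matrix.of fun i j : Fin m => V ((m : ℤ) - 1 - i - j)) := by
  obtain ⟨k, rfl⟩ : ∃ k, m = k + 2 := ⟨m - 2, by omega⟩
  set f : ℤ → ℝ :=
    fun n => Matrix.det (Matrix.of fun i j : Fin (k+2) => V (n + (k+2) - 1 - i - j)) with hf
  set C : ℝ := (-1)^(k+1) * r (k+2) with hC
  have hC0 : C ≠ 0 := mul_ne_zero (pow_ne_zero _ (by norm_num)) hr
  have hstep : ∀ n : ℤ, f (n+1) = C * f n := fun n => simson_step k r V hrec n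
  have key : ∀ n : ℤ, f n = C ^ n * f 0 := by
    intro n
    induction n using Int.induction_on with
    | zero => simp
    | succ n ih => rw [hstep, ih, zpow_add_one₀ hC0]; ring
    | pred n ih =>
      have h1 := hstep (-(n:ℤ) - 1)
      rw [sub_add_cancel] at h1
      have h2 : f (-(n:ℤ)-1) = C⁻¹ * f (-n) := by
        rw [h1]; field_simp
      rw [h2, ih, zpow_sub_one₀ hC0]
      ring
  intro n
  have hfn : Matrix.det (Matrix.of fun i j : Fin (k+2) => V (n + ((k+2:ℕ) : ℤ) - 1 - i - j))
      = f n := by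
    congr 1
  have hf0 : f 0 = Matrix.det (Matrix.of fun i j : Fin (k+2) => V ((((k+2:ℕ)):ℤ) - 1 - i - j)) := by
    simp only [hf]
    congr 1; ext i j
    simp only [Matrix.of_apply]; congr 1; push_cast; ring
  have hCpow : C ^ n = (if Odd (k+2) then 1 else (-1:ℝ)^n) * r (k+2) ^ n := by
    rcases Nat.even_or_odd k with he | ho
    · have h1 : ((-1:ℝ)) ^ (k+1) = -1 := Odd.neg_one_pow (Even.add_one he)
      have h2 : ¬ Odd (k+2) := Nat.not_odd_iff_even.mpr (by rcases he with ⟨t, ht⟩; exact ⟨t+1, by omega⟩)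
      rw [hC, mul_zpow, h1, if_neg h2]
    · have h1 : ((-1:ℝ)) ^ (k+1) = 1 := Even.neg_one_pow (Odd.add_one ho)
      have h2 : Odd (k+2) := by rcases ho with ⟨t, ht⟩; exact ⟨t+1, by omega⟩
      rw [hC, mul_zpow, h1, one_zpow, if_pos h2, one_mul]
  rw [hfn, key n, ← hf0, hCpow]
end
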